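/- Let (S,L) be a Lie-Rinehart algebra over R, U its enveloping algebra, N a left U-module, and M a U-bimodule with invariants M^S = {m : s·m = m·s ∀s∈S} viewed as a left U-module via α⋆m = α·m − m·α. Then the map Φ sending f ∈ Hom_U(N, M^S) to the map U ⊗_S N → M, u ⊗ n ↦ u·f(n) (using the left U-action on M), is a bijection onto Hom_{U-bimod}(U ⊗_S N, M), where U ⊗_S N is a U-bimodule with left action u'·(u⊗n) = u'u ⊗ n and right action (u⊗n)·s = us⊗n, (u⊗n)·α = uα⊗n − u⊗α·n. Its inverse sends g to the map n ↦ g(1⊗n). -/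
import Mathlib


open MulOpposite TensorProduct

/-- Adjunction between `F = U ⊗_S −` and `G = (−)^S`.  Let `(S,L)` be a
Lie-Rinehart algebra over `R`, `U` its enveloping algebra (encoded by `ιS`, `ιL` and the
defining relations; the `S`-module structure of `U` is right multiplication,
`s • u = u·ιS s`), `N` a left `U`-module and `M` a `U`-bimodule.  The assignment
`f ↦ (u ⊗ n ↦ u·f(n))` is a bijection from the `U`-linear maps `N → M^S` onto the
`U`-bimodule maps `U ⊗_S N → M`, with inverse `g ↦ (n ↦ g(1 ⊗ n))`; here this bijection
is expressed by the two unique-existence statements below. -/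
theorem stmt14 {R S L U N M : Type*} [CommRing R] [CommRing S] [Algebra R S]
    [LieRing L] [LieAlgebra R L] [Module S L]
    [Ring U] [Algebra R U] [Module S U]
    [AddCommGroup N] [Module U N] [Module S N]
    [AddCommGroup M] [Module U M] [Module Uᵐᵒᵖ M] [SMulCommClass U Uᵐᵒᵖ M]
    (D : L → Derivation R S S)
    (ιS : S →ₐ[R] U) (ιL : L →ₗ[R] U)
    (hrel1 : ∀ α β : L, ιL ⁅α, β⁆ = ιL α * ιL β - ιL β * ιL α)
    (hrel2 : ∀ (s : S) (α : L), ιL (s • α) = ιS s * ιL α)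
    (hrel3 : ∀ (α : L) (s : S), ιL α * ιS s - ιS s * ιL α = ιS (D α s))
    (hSU : ∀ (s : S) (u : U), s • u = u * ιS s)
    (hSN : ∀ (s : S) (n : N), s • n = ιS s • n) :
    (∀ f : N →+ M,
      ((∀ (s : S) (n : N), f (ιS s • n) = ιS s • f n) ∧
       (∀ (α : L) (n : N), f (ιL α • n) = ιL α • f n - op (ιL α) • f n) ∧
       (∀ (n : N) (s : S), ιS s • f n = op (ιS s) • f n)) →
      ∃! g : U ⊗[S] N →+ M,
        ((∀ (u' u : U) (n : N), g ((u' * u) ⊗ₜ[S] n) = u' • g (u ⊗ₜ[S] n)) ∧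
         (∀ (u : U) (s : S) (n : N),
            g ((u * ιS s) ⊗ₜ[S] n) = op (ιS s) • g (u ⊗ₜ[S] n)) ∧
         (∀ (u : U) (α : L) (n : N),
            g ((u * ιL α) ⊗ₜ[S] n) - g (u ⊗ₜ[S] (ιL α • n))
              = op (ιL α) • g (u ⊗ₜ[S] n))) ∧
        (∀ (u : U) (n : N), g (u ⊗ₜ[S] n) = u • f n)) ∧
    (∀ g : U ⊗[S] N →+ M,
      ((∀ (u' u : U) (n : N), g ((u' * u) ⊗ₜ[S] n) = u' • g (u ⊗ₜ[S] n)) ∧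
       (∀ (u : U) (s : S) (n : N),
          g ((u * ιS s) ⊗ₜ[S] n) = op (ιS s) • g (u ⊗ₜ[S] n)) ∧
       (∀ (u : U) (α : L) (n : N),
          g ((u * ιL α) ⊗ₜ[S] n) - g (u ⊗ₜ[S] (ιL α • n))
            = op (ιL α) • g (u ⊗ₜ[S] n))) →
      ∃! f : N →+ M,
        ((∀ (s : S) (n : N), f (ιS s • n) = ιS s • f n) ∧
         (∀ (α : L) (n : N), f (ιL α • n) = ιL α • f n - op (ιL α) • f n) ∧
         (∀ (n : N) (s : S), ιS s • f n = op (ιS s) • f n)) ∧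
        (∀ n : N, f n = g ((1 : U) ⊗ₜ[S] n))) := by
  constructor
  · rintro f ⟨hf1, hf2, hf3⟩
    set g : U ⊗[S] N →+ M := TensorProduct.liftAddHom
      { toFun := fun u =>
          { toFun := fun n => u • f n
            map_zero' := by simp
            map_add' := fun a b => by
              show u • f (a + b) = u • f a + u • f b
              rw [map_add, smul_add] }
        map_zero' := by ext n; simp
        map_add' := fun a b => by ext n; simp [add_smul] }
      (fun s u n => by
        show (s • u) • f n = u • f (s • n)
        rw [hSU, hSN, hf1, mul_smul]) with hg
    have geval : ∀ (u : U) (n : N), g (u ⊗ₜ[S] n) = u • f n := fun u n => by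
      rw [hg, TensorProduct.liftAddHom_tmul]; rfl
    refine ⟨g, ⟨⟨?_, ?_, ?_⟩, geval⟩, ?_⟩
    · intro u' u n
      rw [geval, geval, mul_smul]
    · intro u s n
      rw [geval, geval, mul_smul, hf3, smul_comm]
    · intro u α n
      rw [geval, geval, geval, mul_smul, hf2, smul_sub, sub_sub_cancel, smul_comm]
    · rintro g' ⟨-, hg'⟩
      ext x
      induction x using TensorProduct.induction_on with
      | zero => simp
      | tmul u n => rw [hg', geval]
      | add x y hx hy => rw [map_add, map_add, hx, hy]
  · rintro g ⟨hg1, hg2, hg3⟩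
    refine ⟨AddMonoidHom.mk' (fun n => g ((1 : U) ⊗ₜ[S] n))
      (fun a b => by
        show g ((1 : U) ⊗ₜ[S] (a + b)) = g ((1 : U) ⊗ₜ[S] a) + g ((1 : U) ⊗ₜ[S] b)
        rw [TensorProduct.tmul_add, map_add]), ⟨⟨?_, ?_, ?_⟩, fun n => rfl⟩, ?_⟩
    · intro s n
      show g ((1 : U) ⊗ₜ[S] (ιS s • n)) = ιS s • g ((1 : U) ⊗ₜ[S] n)
      rw [← hSN, ← TensorProduct.smul_tmul, hSU, one_mul, ← mul_one (ιS s), hg1, mul_one]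
    · intro α n
      show g ((1 : U) ⊗ₜ[S] (ιL α • n)) = ιL α • g ((1 : U) ⊗ₜ[S] n) - op (ιL α) • g ((1 : U) ⊗ₜ[S] n)
      have h2 := hg3 1 α n
      have h1 : g ((1 * ιL α) ⊗ₜ[S] n) = ιL α • g ((1 : U) ⊗ₜ[S] n) := by
        rw [one_mul, ← mul_one (ιL α), hg1, mul_one]
      rw [h1, sub_eq_iff_eq_add] at h2
      rw [h2]
      abel
    · intro n s
      show ιS s • g ((1 : U) ⊗ₜ[S] n) = op (ιS s) • g ((1 : U) ⊗ₜ[S] n)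
      rw [← hg1, mul_one, ← one_mul (ιS s), hg2, one_mul]
    · rintro f' ⟨-, hf'⟩
      ext n
      exact hf' n
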